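/- arXiv:1805.00902 — 2 statements merged into one kernel-verified Lean document; each statement's English description precedes it below -/
import Mathlib

section
/- (Gradient of the Green's function.) Let d ≥ 2, λ ∈ (0,1], and let a ∈ ({0} ∪ [λ,1])^{B_d} be an environment whose graph of open edges has a unique infinite cluster C_∞. Set E^a_d := {(x,y) ∈ E_d : x,y ∈ C_∞ and a({x,y}) ≠ 0}. Then there exist a constant C = C(d,λ) < ∞ and a family of functions (G^e)_{e ∈ E^a_d}, G^e : C_∞ → ℝ, such that for every e = (x,y) ∈ E^a_d: (a) sup_{e' ∈ E^a_d} |∇G^e(e')| ≤ C and ⟨∇G^e, ∇G^e⟩_{C_∞} ≤ C; (b) for every h : C_∞ → ℝ with ⟨∇h, ∇h⟩_{C_∞} < ∞, the sum Σ_{(x',y') ∈ E^a_d} ∇G^e(x',y') · a({x',y'}) · ∇h(x',y') converges absolutely and equals ∇h(e) = h(x) − h(y); and (c) for all e, e' ∈ E^a_d: ∇G^e(e') = ∇G^{e'}(e). -/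
open MeasureTheory Filter
open scoped ENNReal Classical

noncomputable section

namespace Perco

/-- Vertices of the lattice `ℤ^d`. -/
abbrev V (d : ℕ) := Fin d → ℤ

/-- Nearest-neighbour adjacency (`ℓ¹`-distance one). -/
def adj {d : ℕ} (x y : V d) : Prop := (∑ i, |x i - y i|) = 1

/-- A bond is an unordered pair of adjacent vertices. -/
def IsBond {d : ℕ} (e : Sym2 (V d)) : Prop := ∃ x y : V d, adj x y ∧ e = s(x, y)

/-- The set of bonds of `ℤ^d`. -/
abbrev Bond (d : ℕ) := {e : Sym2 (V d) // IsBond e}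

/-- An environment assigns a conductance to every bond. -/
abbrev Env (d : ℕ) := Bond d → ℝ

/-- The conductance of the bond `{x, y}` (zero if `x`, `y` are not adjacent). -/
def aOf {d : ℕ} (a : Env d) (x y : V d) : ℝ :=
  if h : adj x y then a ⟨s(x, y), x, y, h, rfl⟩ else 0

/-- The (oriented) edge `(x, y)` is open. -/
def opn {d : ℕ} (a : Env d) (x y : V d) : Prop := adj x y ∧ aOf a x y ≠ 0

/-- Connectivity through open edges. -/
def conn {d : ℕ} (a : Env d) : V d → V d → Prop := Relation.ReflTransGen (opn a)

/-- `C_∞(a)`: the union of all infinite clusters of the environment `a`. -/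
def Cinfty {d : ℕ} (a : Env d) : Set (V d) := {x | {y | conn a x y}.Infinite}

/-- The graph of open edges has a (unique) infinite cluster. -/
def HasUniqueInfiniteCluster {d : ℕ} (a : Env d) : Prop :=
  (Cinfty a).Nonempty ∧ ∀ x ∈ Cinfty a, ∀ y ∈ Cinfty a, conn a x y

/-- The environment takes values in `{0} ∪ [lam, 1]`. -/
def EnvBounds {d : ℕ} (lam : ℝ) (a : Env d) : Prop :=
  ∀ e : Bond d, a e = 0 ∨ a e ∈ Set.Icc lam 1

/-- The discrete gradient of a function defined on the cluster `C`:
`∇u(x,y) = u x - u y` if `x, y ∈ C` and the edge `{x,y}` is open, and `0` otherwise. -/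
def grad {d : ℕ} (a : Env d) (C : Set (V d)) (u : V d → ℝ) (x y : V d) : ℝ :=
  if x ∈ C ∧ y ∈ C ∧ opn a x y then u x - u y else 0

/-- `|F|(x)² = (1/2) ∑_y F(x,y)²` for a vector field `F`. -/
def sqNorm {d : ℕ} (F : V d → V d → ℝ) (x : V d) : ℝ := (1 / 2) * ∑' y, (F x y) ^ 2

/-- `u` is `a`-harmonic at the point `x`. -/
def HarmonicAt {d : ℕ} (a : Env d) (u : V d → ℝ) (x : V d) : Prop :=
  ∑' y, aOf a x y * (u x - u y) = 0

/-- `u` is `a`-harmonic on the set `C`. -/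
def HarmonicOn {d : ℕ} (a : Env d) (C : Set (V d)) (u : V d → ℝ) : Prop :=
  ∀ x ∈ C, HarmonicAt a u x

/-- The closed `ℓ∞` ball of radius `R` in `ℤ^d`. -/
def ballZ (d : ℕ) (R : ℝ) : Set (V d) := {x | ∀ i, (|x i| : ℝ) ≤ R}

/-- The `ℓ∞` distance of two lattice points, as a real number. -/
def distZ {d : ℕ} (x y : V d) : ℝ :=
  (((Finset.univ.sup fun i => (x i - y i).natAbs) : ℕ) : ℝ)

/-- Embedding of `ℤ^d` into `ℝ^d`. -/
def toR {d : ℕ} (x : V d) : Fin d → ℝ := fun i => (x i : ℝ)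

/-- Sum of `f` over the (typically finite) set `S ⊆ ℤ^d`. -/
def setSum {d : ℕ} (S : Set (V d)) (f : V d → ℝ) : ℝ := ∑' x : S, f x.1

/-- Average of `f` over the set `S ⊆ ℤ^d` (zero if `S` is empty or infinite). -/
def setAvg {d : ℕ} (S : Set (V d)) (f : V d → ℝ) : ℝ := (S.ncard : ℝ)⁻¹ * setSum S f

/-- The dilated triadic cube `r□_m = (-r 3^m/2, r 3^m/2)^d ∩ ℤ^d`. -/
def tcube (d : ℕ) (r : ℝ) (m : ℕ) : Set (V d) := {x | ∀ i, 2 * (|x i| : ℝ) < r * 3 ^ m}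

/-- The edge `(x, y)` belongs to `E^a_d`: it is open and both endpoints lie on `C_∞`. -/
def openEdge {d : ℕ} (a : Env d) (x y : V d) : Prop :=
  x ∈ Cinfty a ∧ y ∈ Cinfty a ∧ opn a x y

/-- `u` has finite Dirichlet energy `⟨∇u, ∇u⟩_{C_∞} < ∞`. -/
def FiniteEnergy {d : ℕ} (a : Env d) (u : V d → ℝ) : Prop :=
  Summable (fun pr : V d × V d => (grad a (Cinfty a) u pr.1 pr.2) ^ 2)

/-- The Dirichlet energy `⟨∇u, ∇u⟩_{C_∞}`. -/
def energy {d : ℕ} (a : Env d) (u : V d → ℝ) : ℝ :=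
  ∑' pr : V d × V d, (grad a (Cinfty a) u pr.1 pr.2) ^ 2

/-- `w` is a weak solution of `-∇·(a∇w) = -∇·ξ` on `C_∞`: for every finite-energy `h`,
the pairings `⟨∇w, a∇h⟩_{C_∞}` and `⟨ξ, ∇h⟩_{C_∞}` converge absolutely and coincide. -/
def IsWeakSol {d : ℕ} (a : Env d) (ξ : V d → V d → ℝ) (w : V d → ℝ) : Prop :=
  ∀ h : V d → ℝ, FiniteEnergy a h →
    Summable (fun pr : V d × V d =>
      |grad a (Cinfty a) w pr.1 pr.2 * aOf a pr.1 pr.2 * grad a (Cinfty a) h pr.1 pr.2|) ∧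
    Summable (fun pr : V d × V d => |ξ pr.1 pr.2 * grad a (Cinfty a) h pr.1 pr.2|) ∧
    ∑' pr : V d × V d,
        grad a (Cinfty a) w pr.1 pr.2 * aOf a pr.1 pr.2 * grad a (Cinfty a) h pr.1 pr.2
      = ∑' pr : V d × V d, ξ pr.1 pr.2 * grad a (Cinfty a) h pr.1 pr.2

/-- `G` is a family of Green's functions: for every `e = (x,y) ∈ E^a_d`, the function `G x y`
has bounded gradient, finite Dirichlet energy, and satisfies
`⟨∇G^e, a∇h⟩_{C_∞} = ∇h(e)` (with absolute convergence) for every finite-energy `h`. -/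
def IsGreenFamily {d : ℕ} (a : Env d) (G : V d → V d → V d → ℝ) : Prop :=
  ∀ x y : V d, openEdge a x y →
    (∃ C : ℝ, ∀ x' y' : V d, openEdge a x' y' → |grad a (Cinfty a) (G x y) x' y'| ≤ C) ∧
    FiniteEnergy a (G x y) ∧
    (∀ h : V d → ℝ, FiniteEnergy a h →
      Summable (fun pr : V d × V d =>
        |grad a (Cinfty a) (G x y) pr.1 pr.2 * aOf a pr.1 pr.2 *
          grad a (Cinfty a) h pr.1 pr.2|) ∧
      ∑' pr : V d × V d,
          grad a (Cinfty a) (G x y) pr.1 pr.2 * aOf a pr.1 pr.2 *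
            grad a (Cinfty a) h pr.1 pr.2
        = h x - h y)

/-! ### Auxiliary lemmas -/

section Aux

variable {d : ℕ}

lemma adj_symm {x y : V d} (h : adj x y) : adj y x := by
  unfold adj at *
  simpa [abs_sub_comm] using h

lemma aOf_symm (a : Env d) (x y : V d) : aOf a x y = aOf a y x := by
  unfold aOf
  by_cases h : adj x y
  · rw [dif_pos h, dif_pos (adj_symm h)]
    congr 1
    exact Subtype.ext (Sym2.eq_swap)
  · rw [dif_neg h, dif_neg (fun h' => h (adj_symm h'))]

lemma opn_symm (a : Env d) {x y : V d} (h : opn a x y) : opn a y x :=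
  ⟨adj_symm h.1, by rw [← aOf_symm]; exact h.2⟩

lemma conn_symm (a : Env d) {x y : V d} (h : conn a x y) : conn a y x := by
  induction h with
  | refl => exact Relation.ReflTransGen.refl
  | @tail b c hab hbc ih => exact Relation.ReflTransGen.head (opn_symm a hbc) ih

lemma mem_Cinfty_of_conn (a : Env d) {x y : V d} (hx : x ∈ Cinfty a)
    (hxy : conn a x y) : y ∈ Cinfty a := by
  refine Set.Infinite.mono (fun z hz => ?_) hx
  exact Relation.ReflTransGen.trans (conn_symm a hxy) hz

lemma aOf_nonneg {lam : ℝ} (hlam : 0 < lam) {a : Env d} (hb : EnvBounds lam a)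
    (x y : V d) : 0 ≤ aOf a x y := by
  unfold aOf
  split
  · rcases hb _ with h | h
    · rw [h]
    · exact le_trans hlam.le h.1
  · rfl

lemma aOf_mem_Icc {lam : ℝ} {a : Env d} (hb : EnvBounds lam a)
    {x y : V d} (h : opn a x y) : aOf a x y ∈ Set.Icc lam 1 := by
  have h2 := h.2
  unfold aOf at *
  rw [dif_pos h.1] at *
  rcases hb _ with h' | h'
  · exact absurd h' h2
  · exact h'

end Aux

section Hilbert

variable {d : ℕ}

/-- The weighted gradient field `√a · ∇u`. -/
def Phi (a : Env d) (u : V d → ℝ) : V d × V d → ℝ :=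
  fun pr => Real.sqrt (aOf a pr.1 pr.2) * grad a (Cinfty a) u pr.1 pr.2

lemma grad_add (a : Env d) (C : Set (V d)) (u v : V d → ℝ) (x y : V d) :
    grad a C (u + v) x y = grad a C u x y + grad a C v x y := by
  unfold grad; split <;> simp <;> ring

lemma grad_smul (a : Env d) (C : Set (V d)) (c : ℝ) (u : V d → ℝ) (x y : V d) :
    grad a C (c • u) x y = c * grad a C u x y := by
  unfold grad; split <;> simp <;> ring

lemma grad_zero (a : Env d) (C : Set (V d)) (x y : V d) :
    grad a C (0 : V d → ℝ) x y = 0 := by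
  unfold grad; split <;> simp

/-- The space of weighted gradients inside `ℓ²(E_d)`. -/
def Ksub (a : Env d) : Submodule ℝ (lp (fun _ : V d × V d => ℝ) 2) where
  carrier := {F | ∃ u : V d → ℝ, ∀ pr : V d × V d, F pr = Phi a u pr}
  zero_mem' := ⟨0, fun pr => by simp [Phi, grad_zero, lp.coeFn_zero]⟩
  add_mem' := by
    rintro F G ⟨u, hu⟩ ⟨v, hv⟩
    exact ⟨u + v, fun pr => by
      rw [lp.coeFn_add, Pi.add_apply, hu, hv, Phi, Phi, Phi, grad_add]; ring⟩
  smul_mem' := by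
    rintro c F ⟨u, hu⟩
    exact ⟨c • u, fun pr => by
      rw [lp.coeFn_smul, Pi.smul_apply, hu, Phi, Phi, grad_smul]
      simp; ring⟩

end Hilbert

section Closed

variable {d : ℕ}

set_option synthInstance.maxHeartbeats 1000000 in
lemma Ksub_isClosed {lam : ℝ} (hlam : 0 < lam) {a : Env d} (hb : EnvBounds lam a)
    (huic : HasUniqueInfiniteCluster a) :
    IsClosed ((Ksub a : Submodule ℝ (lp (fun _ : V d × V d => ℝ) 2)) :
      Set (lp (fun _ : V d × V d => ℝ) 2)) := by
  refine IsSeqClosed.isClosed ?_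
  intro Fs F hFs hlim
  choose u hu using hFs
  -- pointwise convergence
  have hpt : ∀ pr : V d × V d,
      Tendsto (fun n => Phi a (u n) pr) atTop (nhds (F pr)) := by
    intro pr
    have h0 : Tendsto (fun n => ‖Fs n - F‖) atTop (nhds 0) :=
      (tendsto_iff_norm_sub_tendsto_zero).1 hlim
    have h2 : ∀ n, ‖(Fs n) pr - F pr‖ ≤ ‖Fs n - F‖ := by
      intro n
      have := lp.norm_apply_le_norm (by norm_num : (2 : ℝ≥0∞) ≠ 0) (Fs n - F) pr
      rwa [lp.coeFn_sub, Pi.sub_apply] at this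
    have h3 : Tendsto (fun n => (Fs n) pr) atTop (nhds (F pr)) := by
      rw [tendsto_iff_norm_sub_tendsto_zero]
      exact squeeze_zero (fun n => norm_nonneg _) h2 h0
    have heq : (fun n => ((Fs n) pr : ℝ)) = fun n => Phi a (u n) pr := by
      funext n; exact hu n pr
    rwa [heq] at h3
  -- convergence of gradients on good edges
  have hgrad : ∀ x y : V d, (x ∈ Cinfty a ∧ y ∈ Cinfty a ∧ opn a x y) →
      Tendsto (fun n => u n x - u n y) atTop
        (nhds (F (x, y) / Real.sqrt (aOf a x y))) := by
    intro x y hgood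
    have hspos : 0 < Real.sqrt (aOf a x y) :=
      Real.sqrt_pos.2 (lt_of_lt_of_le hlam (aOf_mem_Icc hb hgood.2.2).1)
    have h1 := (hpt (x, y)).div_const (Real.sqrt (aOf a x y))
    have heq : (fun n => Phi a (u n) (x, y) / Real.sqrt (aOf a x y))
        = fun n => u n x - u n y := by
      funext n
      show Real.sqrt (aOf a x y) * grad a (Cinfty a) (u n) x y / Real.sqrt (aOf a x y) = _
      rw [mul_comm, mul_div_assoc, div_self hspos.ne', mul_one]
      unfold grad; rw [if_pos hgood]
    rwa [heq] at h1
  obtain ⟨x0, hx0⟩ := huic.1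
  have key : ∀ x : V d, conn a x0 x →
      ∃ L : ℝ, Tendsto (fun n => u n x - u n x0) atTop (nhds L) := by
    intro x hconn
    induction hconn with
    | refl => exact ⟨0, by simpa using tendsto_const_nhds⟩
    | @tail b c hab hbc ih =>
        obtain ⟨L, hL⟩ := ih
        have hbC : b ∈ Cinfty a := mem_Cinfty_of_conn a hx0 hab
        have hcC : c ∈ Cinfty a :=
          mem_Cinfty_of_conn a hbC (Relation.ReflTransGen.single hbc)
        have h1 := hgrad b c ⟨hbC, hcC, hbc⟩
        refine ⟨L - F (b, c) / Real.sqrt (aOf a b c), ?_⟩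
        have heq : (fun n => u n c - u n x0)
            = fun n => (u n b - u n x0) - (u n b - u n c) := by funext n; ring
        rw [heq]; exact hL.sub h1
  have keyAll : ∀ x : V d, ∃ L : ℝ,
      x ∈ Cinfty a → Tendsto (fun n => u n x - u n x0) atTop (nhds L) := by
    intro x
    by_cases hx : x ∈ Cinfty a
    · obtain ⟨L, hL⟩ := key x (huic.2 x0 hx0 x hx)
      exact ⟨L, fun _ => hL⟩
    · exact ⟨0, fun h => absurd h hx⟩
  choose L hLx using keyAll
  refine ⟨L, ?_⟩
  intro pr
  by_cases hgood : pr.1 ∈ Cinfty a ∧ pr.2 ∈ Cinfty a ∧ opn a pr.1 pr.2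
  · have hspos : 0 < Real.sqrt (aOf a pr.1 pr.2) :=
      Real.sqrt_pos.2 (lt_of_lt_of_le hlam (aOf_mem_Icc hb hgood.2.2).1)
    have h1 := (hLx pr.1 hgood.1).sub (hLx pr.2 hgood.2.1)
    have heq : (fun n => (u n pr.1 - u n x0) - (u n pr.2 - u n x0))
        = fun n => u n pr.1 - u n pr.2 := by funext n; ring
    rw [heq] at h1
    have h2 := hgrad pr.1 pr.2 hgood
    have h3 : L pr.1 - L pr.2 = F (pr.1, pr.2) / Real.sqrt (aOf a pr.1 pr.2) :=
      tendsto_nhds_unique h1 h2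
    show F pr = Real.sqrt (aOf a pr.1 pr.2) * grad a (Cinfty a) L pr.1 pr.2
    unfold grad; rw [if_pos hgood, h3, mul_div_cancel₀ _ hspos.ne']
  · have hz : ∀ n, Phi a (u n) pr = 0 := by
      intro n
      show Real.sqrt (aOf a pr.1 pr.2) * grad a (Cinfty a) (u n) pr.1 pr.2 = 0
      unfold grad; rw [if_neg hgood, mul_zero]
    have h1 := hpt pr
    rw [show (fun n => Phi a (u n) pr) = fun _ => (0 : ℝ) from funext hz] at h1
    have hF0 : F pr = 0 := tendsto_nhds_unique h1 tendsto_const_nhds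
    show F pr = Real.sqrt (aOf a pr.1 pr.2) * grad a (Cinfty a) L pr.1 pr.2
    unfold grad; rw [if_neg hgood, mul_zero, hF0]

end Closed

open scoped RealInnerProductSpace

section MoreAux

lemma memℓp_two_iff {ι : Type*} (f : ι → ℝ) :
    Memℓp f 2 ↔ Summable (fun i => (f i) ^ 2) := by
  have h2 : ∀ i, ‖f i‖ ^ ((2 : ℝ≥0∞).toReal) = (f i) ^ 2 := by
    intro i
    rw [show ((2 : ℝ≥0∞).toReal) = ((2 : ℕ) : ℝ) by simp, Real.rpow_natCast]
    simp [sq_abs]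
  constructor
  · intro h
    have := (memℓp_gen_iff (p := 2) (by norm_num)).1 h
    simpa only [h2] using this
  · intro h
    exact memℓp_gen (by simpa only [h2] using h)

lemma inner_real_mul (x y : ℝ) : ⟪x, y⟫ = x * y := by simp [RCLike.inner_apply]; ring

lemma mem_Ksub_iff {d : ℕ} (a : Env d) (F : lp (fun _ : V d × V d => ℝ) 2) :
    F ∈ Ksub a ↔ ∃ u : V d → ℝ, ∀ pr : V d × V d, F pr = Phi a u pr := Iff.rfl

end MoreAux

lemma aOf_le_one {lam : ℝ} (hlam : 0 < lam) {d : ℕ} {a : Env d} (hb : EnvBounds lam a)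
    (x y : V d) : aOf a x y ≤ 1 := by
  unfold aOf
  split
  · rcases hb _ with h | h
    · rw [h]; norm_num
    · exact h.2
  · norm_num

/-- Gradient of the Green's function.
There exist `C = C(d, λ)` and a family `(G^e)_{e ∈ E^a_d}` such that every `G^e` has gradient
bounded by `C` and Dirichlet energy at most `C`, solves `-∇·(a∇G^e) = δ_x - δ_y` weakly, and
the symmetry `∇G^e(e') = ∇G^{e'}(e)` holds. -/
theorem statement4 (d : ℕ) (hd : 2 ≤ d) (lam : ℝ) (hlam0 : 0 < lam) (hlam1 : lam ≤ 1) :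
    ∃ C : ℝ, 0 < C ∧
      ∀ a : Env d, EnvBounds lam a → HasUniqueInfiniteCluster a →
        ∃ G : V d → V d → V d → ℝ,
          ∀ x y : V d, openEdge a x y →
            (∀ x' y' : V d, openEdge a x' y' → |grad a (Cinfty a) (G x y) x' y'| ≤ C) ∧
            (FiniteEnergy a (G x y) ∧ energy a (G x y) ≤ C) ∧
            (∀ h : V d → ℝ, FiniteEnergy a h →
              Summable (fun pr : V d × V d =>
                |grad a (Cinfty a) (G x y) pr.1 pr.2 * aOf a pr.1 pr.2 *
                  grad a (Cinfty a) h pr.1 pr.2|) ∧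
              ∑' pr : V d × V d,
                  grad a (Cinfty a) (G x y) pr.1 pr.2 * aOf a pr.1 pr.2 *
                    grad a (Cinfty a) h pr.1 pr.2
                = h x - h y) ∧
            (∀ x' y' : V d, openEdge a x' y' →
              grad a (Cinfty a) (G x y) x' y' = grad a (Cinfty a) (G x' y') x y) := by
  classical
  have hC : (0 : ℝ) < lam⁻¹ * lam⁻¹ + lam⁻¹ := by positivity
  refine ⟨lam⁻¹ * lam⁻¹ + lam⁻¹, hC, ?_⟩
  intro a hb huic
  haveI : CompleteSpace (Ksub a : Submodule ℝ (lp (fun _ : V d × V d => ℝ) 2)) :=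
    (Ksub_isClosed hlam0 hb huic).completeSpace_coe
  let vv : V d → V d → lp (fun _ : V d × V d => ℝ) 2 :=
    fun x y => lp.single 2 (x, y) ((Real.sqrt (aOf a x y))⁻¹)
  let P : V d → V d → lp (fun _ : V d × V d => ℝ) 2 :=
    fun x y => ((Ksub a).orthogonalProjectionOnto (vv x y) : lp (fun _ : V d × V d => ℝ) 2)
  have hPK : ∀ x y : V d, P x y ∈ Ksub a :=
    fun x y => ((Ksub a).orthogonalProjectionOnto (vv x y)).2
  have hPmem : ∀ x y : V d, ∃ u : V d → ℝ, ∀ pr : V d × V d, (P x y) pr = Phi a u pr :=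
    fun x y => (mem_Ksub_iff a _).1 (hPK x y)
  choose G hG using hPmem
  -- basic facts about open edges
  have hsq : ∀ x y : V d, opn a x y → 0 < Real.sqrt (aOf a x y) :=
    fun x y h => Real.sqrt_pos.2 (lt_of_lt_of_le hlam0 (aOf_mem_Icc hb h).1)
  -- the gradient of G in terms of P
  have gradform : ∀ x1 y1 x2 y2 : V d, openEdge a x2 y2 →
      grad a (Cinfty a) (G x1 y1) x2 y2
        = (Real.sqrt (aOf a x2 y2))⁻¹ * (P x1 y1) (x2, y2) := by
    intro x1 y1 x2 y2 h2
    have h1 : (P x1 y1) (x2, y2)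
        = Real.sqrt (aOf a x2 y2) * grad a (Cinfty a) (G x1 y1) x2 y2 := hG x1 y1 (x2, y2)
    rw [h1, inv_mul_cancel_left₀ (hsq x2 y2 h2.2.2).ne']
  -- norm bounds
  have hnormv : ∀ x2 y2 : V d, opn a x2 y2 → ‖vv x2 y2‖ ≤ (Real.sqrt lam)⁻¹ := by
    intro x2 y2 h2
    have h1 : ‖vv x2 y2‖ = ‖(Real.sqrt (aOf a x2 y2))⁻¹‖ :=
      lp.norm_single (E := fun _ : V d × V d => ℝ) (p := 2) (by norm_num)
        (x2, y2) (Real.sqrt (aOf a x2 y2))⁻¹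
    rw [h1, Real.norm_eq_abs, abs_of_nonneg (by positivity)]
    exact inv_anti₀ (Real.sqrt_pos.2 hlam0)
      (Real.sqrt_le_sqrt (aOf_mem_Icc hb h2).1)
  have hnormP : ∀ x2 y2 : V d, opn a x2 y2 → ‖P x2 y2‖ ≤ (Real.sqrt lam)⁻¹ := by
    intro x2 y2 h2
    have h1 : ‖P x2 y2‖ ≤ ‖vv x2 y2‖ := by
      calc ‖P x2 y2‖ = ‖(Ksub a).orthogonalProjectionOnto (vv x2 y2)‖ := rfl
        _ ≤ ‖((Ksub a).orthogonalProjectionOnto :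
              lp (fun _ : V d × V d => ℝ) 2 →L[ℝ] (Ksub a))‖ * ‖vv x2 y2‖ :=
            ((Ksub a).orthogonalProjectionOnto).le_opNorm _
        _ ≤ 1 * ‖vv x2 y2‖ :=
            mul_le_mul_of_nonneg_right (Submodule.orthogonalProjectionOnto_norm_le _) (norm_nonneg _)
        _ = ‖vv x2 y2‖ := one_mul _
    exact le_trans h1 (hnormv x2 y2 h2)
  -- projection identities
  have hproj : ∀ x2 y2 : V d, ∀ w : lp (fun _ : V d × V d => ℝ) 2, w ∈ Ksub a →
      ⟪w, P x2 y2⟫ = ⟪w, vv x2 y2⟫ := by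
    intro x2 y2 w hw
    have h1 := Submodule.sub_starProjection_mem_orthogonal (K := Ksub a) (vv x2 y2)
    have h3 : ⟪w, vv x2 y2 - P x2 y2⟫ = 0 :=
      (Submodule.mem_orthogonal _ _).1 h1 w hw
    rw [inner_sub_right] at h3
    linarith
  have hvinner : ∀ x2 y2 : V d, ∀ F : lp (fun _ : V d × V d => ℝ) 2,
      ⟪vv x2 y2, F⟫ = (Real.sqrt (aOf a x2 y2))⁻¹ * F (x2, y2) := by
    intro x2 y2 F
    rw [lp.inner_single_left]
    exact inner_real_mul _ _
  have hsqlam : (Real.sqrt lam)⁻¹ * (Real.sqrt lam)⁻¹ = lam⁻¹ := by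
    rw [← mul_inv, Real.mul_self_sqrt hlam0.le]
  refine ⟨G, ?_⟩
  intro x y hxy
  obtain ⟨hxC, hyC, hopn⟩ := hxy
  have hs0 : 0 < Real.sqrt (aOf a x y) := hsq x y hopn
  have hsumP : Summable (fun pr : V d × V d => ((P x y) pr) ^ 2) :=
    (memℓp_two_iff _).1 (lp.memℓp (P x y))
  have hptb : ∀ pr : V d × V d,
      (grad a (Cinfty a) (G x y) pr.1 pr.2) ^ 2 ≤ lam⁻¹ * ((P x y) pr) ^ 2 := by
    intro pr
    by_cases hg : pr.1 ∈ Cinfty a ∧ pr.2 ∈ Cinfty a ∧ opn a pr.1 pr.2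
    · rw [gradform x y pr.1 pr.2 hg, mul_pow]
      have h1 : ((Real.sqrt (aOf a pr.1 pr.2))⁻¹) ^ 2 = (aOf a pr.1 pr.2)⁻¹ := by
        rw [inv_pow, Real.sq_sqrt (aOf_nonneg hlam0 hb _ _)]
      rw [h1]
      have h2 : (aOf a pr.1 pr.2)⁻¹ ≤ lam⁻¹ :=
        inv_anti₀ hlam0 (aOf_mem_Icc hb hg.2.2).1
      have h3 : (0:ℝ) ≤ ((P x y) (pr.1, pr.2)) ^ 2 := sq_nonneg _
      calc (aOf a pr.1 pr.2)⁻¹ * ((P x y) (pr.1, pr.2)) ^ 2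
          ≤ lam⁻¹ * ((P x y) (pr.1, pr.2)) ^ 2 := mul_le_mul_of_nonneg_right h2 h3
        _ = lam⁻¹ * ((P x y) pr) ^ 2 := by rw [Prod.mk.eta]
    · rw [show grad a (Cinfty a) (G x y) pr.1 pr.2 = 0 from by
        unfold grad; rw [if_neg hg]]
      have := sq_nonneg ((P x y) pr)
      have h0 : (0:ℝ) ≤ lam⁻¹ := inv_nonneg.2 hlam0.le
      nlinarith
  have hFE : FiniteEnergy a (G x y) :=
    Summable.of_nonneg_of_le (fun pr => sq_nonneg _) hptb (hsumP.mul_left _)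
  have hnormsq : ∑' pr : V d × V d, ((P x y) pr) ^ 2 = ‖P x y‖ ^ 2 := by
    rw [← real_inner_self_eq_norm_sq, lp.inner_eq_tsum]
    refine tsum_congr fun pr => ?_
    rw [inner_real_mul, sq]
  have henergy : energy a (G x y) ≤ lam⁻¹ * lam⁻¹ := by
    have h1 : energy a (G x y) ≤ ∑' pr : V d × V d, lam⁻¹ * ((P x y) pr) ^ 2 :=
      Summable.tsum_le_tsum hptb hFE (hsumP.mul_left _)
    rw [tsum_mul_left, hnormsq] at h1
    refine le_trans h1 ?_
    have h2 : ‖P x y‖ ^ 2 ≤ ((Real.sqrt lam)⁻¹) ^ 2 :=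
      pow_le_pow_left₀ (norm_nonneg _) (hnormP x y hopn) 2
    have h3 : ((Real.sqrt lam)⁻¹) ^ 2 = lam⁻¹ := by rw [sq, hsqlam]
    calc lam⁻¹ * ‖P x y‖ ^ 2 ≤ lam⁻¹ * ((Real.sqrt lam)⁻¹) ^ 2 :=
        mul_le_mul_of_nonneg_left h2 (inv_nonneg.2 hlam0.le)
      _ = lam⁻¹ * lam⁻¹ := by rw [h3]
  refine ⟨?_, ⟨hFE, le_trans henergy (le_add_of_nonneg_right (inv_nonneg.2 hlam0.le))⟩, ?_, ?_⟩
  · -- pointwise bound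
    intro x' y' h'
    rw [gradform x y x' y' h', abs_mul]
    have h1 : |((Real.sqrt (aOf a x' y'))⁻¹)| ≤ (Real.sqrt lam)⁻¹ := by
      rw [abs_of_nonneg (by positivity)]
      exact inv_anti₀ (Real.sqrt_pos.2 hlam0)
        (Real.sqrt_le_sqrt (aOf_mem_Icc hb h'.2.2).1)
    have h2 : |(P x y) (x', y')| ≤ (Real.sqrt lam)⁻¹ := by
      refine le_trans ?_ (hnormP x y hopn)
      exact lp.norm_apply_le_norm (by norm_num) (P x y) (x', y')
    calc |((Real.sqrt (aOf a x' y'))⁻¹)| * |(P x y) (x', y')|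
        ≤ (Real.sqrt lam)⁻¹ * (Real.sqrt lam)⁻¹ :=
          mul_le_mul h1 h2 (abs_nonneg _) (by positivity)
      _ = lam⁻¹ := hsqlam
      _ ≤ lam⁻¹ * lam⁻¹ + lam⁻¹ := by nlinarith [inv_pos.2 hlam0]
  · -- the weak equation
    intro h hFEh
    have hmemh : Memℓp (Phi a h) 2 := by
      rw [memℓp_two_iff]
      refine Summable.of_nonneg_of_le (fun pr => sq_nonneg _) ?_ hFEh
      intro pr
      show (Real.sqrt (aOf a pr.1 pr.2) * grad a (Cinfty a) h pr.1 pr.2) ^ 2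
        ≤ (grad a (Cinfty a) h pr.1 pr.2) ^ 2
      rw [mul_pow, Real.sq_sqrt (aOf_nonneg hlam0 hb _ _)]
      calc aOf a pr.1 pr.2 * (grad a (Cinfty a) h pr.1 pr.2) ^ 2
          ≤ 1 * (grad a (Cinfty a) h pr.1 pr.2) ^ 2 :=
            mul_le_mul_of_nonneg_right (aOf_le_one hlam0 hb _ _) (sq_nonneg _)
        _ = _ := one_mul _
    let Fh : lp (fun _ : V d × V d => ℝ) 2 := ⟨Phi a h, hmemh⟩
    have hFhK : Fh ∈ Ksub a := ⟨h, fun pr => rfl⟩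
    have hptEq : ∀ pr : V d × V d,
        grad a (Cinfty a) (G x y) pr.1 pr.2 * aOf a pr.1 pr.2 *
          grad a (Cinfty a) h pr.1 pr.2 = (P x y) pr * Fh pr := by
      intro pr
      have h1 : (P x y) pr
          = Real.sqrt (aOf a pr.1 pr.2) * grad a (Cinfty a) (G x y) pr.1 pr.2 :=
        hG x y pr
      have h2 : (Fh : (V d × V d) → ℝ) pr
          = Real.sqrt (aOf a pr.1 pr.2) * grad a (Cinfty a) h pr.1 pr.2 := rfl
      have h3 : Real.sqrt (aOf a pr.1 pr.2) * Real.sqrt (aOf a pr.1 pr.2)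
          = aOf a pr.1 pr.2 := Real.mul_self_sqrt (aOf_nonneg hlam0 hb _ _)
      rw [h1, h2]
      conv_lhs => rw [← h3]
      ring
    have hs2 : Summable (fun pr : V d × V d => ((Fh : (V d × V d) → ℝ) pr) ^ 2) :=
      (memℓp_two_iff _).1 hmemh
    constructor
    · refine Summable.of_nonneg_of_le (fun pr => abs_nonneg _) ?_
        ((hsumP.add hs2).div_const 2)
      intro pr
      rw [hptEq pr]
      have key : ∀ p q : ℝ, |p * q| ≤ (p ^ 2 + q ^ 2) / 2 := by
        intro p q
        rw [abs_mul]
        nlinarith [sq_nonneg (|p| - |q|), sq_abs p, sq_abs q, abs_nonneg p, abs_nonneg q]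
      exact key _ _
    · calc ∑' pr : V d × V d, grad a (Cinfty a) (G x y) pr.1 pr.2 * aOf a pr.1 pr.2 *
            grad a (Cinfty a) h pr.1 pr.2
          = ∑' pr : V d × V d, (P x y) pr * Fh pr := tsum_congr hptEq
        _ = ∑' pr : V d × V d, ⟪(P x y) pr, (Fh : (V d × V d) → ℝ) pr⟫ :=
            tsum_congr fun pr => (inner_real_mul _ _).symm
        _ = ⟪P x y, Fh⟫ := (lp.inner_eq_tsum _ _).symm
        _ = ⟪Fh, P x y⟫ := real_inner_comm _ _
        _ = ⟪Fh, vv x y⟫ := hproj x y Fh hFhK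
        _ = ⟪vv x y, Fh⟫ := real_inner_comm _ _
        _ = (Real.sqrt (aOf a x y))⁻¹ * (Fh : (V d × V d) → ℝ) (x, y) := hvinner x y Fh
        _ = (Real.sqrt (aOf a x y))⁻¹ *
              (Real.sqrt (aOf a x y) * grad a (Cinfty a) h x y) := rfl
        _ = grad a (Cinfty a) h x y := inv_mul_cancel_left₀ hs0.ne' _
        _ = h x - h y := by unfold grad; rw [if_pos ⟨hxC, hyC, hopn⟩]
  · -- symmetry
    intro x' y' h'
    rw [gradform x y x' y' h', gradform x' y' x y ⟨hxC, hyC, hopn⟩]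
    rw [← hvinner x' y' (P x y), ← hvinner x y (P x' y')]
    calc ⟪vv x' y', P x y⟫ = ⟪P x y, vv x' y'⟫ := real_inner_comm _ _
      _ = ⟪P x y, P x' y'⟫ := (hproj x' y' (P x y) (hPK x y)).symm
      _ = ⟪P x' y', P x y⟫ := real_inner_comm _ _
      _ = ⟪P x' y', vv x y⟫ := hproj x y (P x' y') (hPK x' y')
      _ = ⟪vv x y, P x' y'⟫ := real_inner_comm _ _

end Perco
end
end

section
/- (Appendix A, Step 1: mollification error in the dual Sobolev norm.) Let d ≥ 1 and q ∈ [2, ∞). Let ψ ∈ C_c^∞(B_{1/4}) with ∫_{ℝ^d} ψ = 1. Then there exists a constant C = C(d, ψ) < ∞ such that for every continuously differentiable function u defined on an open neighborhood of the closed ball B̄_1: ‖u − ψ ∗ u‖_{W^{−1,q}(B_{3/4})} ≤ C ‖∇u‖_{W^{−1,q}(B_1)}, where (ψ ∗ u)(x) := ∫_{B_{1/4}} ψ(s) u(x − s) ds for x ∈ B_{3/4}. -/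
open MeasureTheory

noncomputable section

namespace DualSobolev

variable {d : ℕ}

/-- The gradient of `g : ℝ^d → ℝ` as a vector field. -/
def gradVec (g : (Fin d → ℝ) → ℝ) (x : Fin d → ℝ) : Fin d → ℝ :=
  fun i => fderiv ℝ g x (Pi.single i 1)

/-- A scalar test function for the `W^{-1,q}(B)` norm: a smooth compactly supported function
`g` with support in `B` and `‖g‖_{L^p(B)} + ‖∇g‖_{L^p(B)} ≤ 1`. -/
def TestFun (B : Set (Fin d → ℝ)) (p : ℝ) (g : (Fin d → ℝ) → ℝ) : Prop :=
  (∀ n : ℕ, ContDiff ℝ n g) ∧ HasCompactSupport g ∧ tsupport g ⊆ B ∧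
    (∫ x in B, |g x| ^ p) ^ (1 / p) + (∫ x in B, ‖fderiv ℝ g x‖ ^ p) ^ (1 / p) ≤ 1

/-- The `W^{-1,q}(B)` norm of a scalar function, by duality with `W^{1,p}_0(B)`,
`p = q/(q-1)`. -/
def dualNorm (q : ℝ) (B : Set (Fin d → ℝ)) (f : (Fin d → ℝ) → ℝ) : ℝ :=
  sSup {t : ℝ | ∃ g, TestFun B (q / (q - 1)) g ∧ t = ∫ x in B, f x * g x}

/-- A vector-valued test function for the `W^{-1,q}(B)` norm of vector fields. -/
def TestVF (B : Set (Fin d → ℝ)) (p : ℝ) (g : (Fin d → ℝ) → Fin d → ℝ) : Prop :=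
  (∀ n : ℕ, ContDiff ℝ n g) ∧ HasCompactSupport g ∧ tsupport g ⊆ B ∧
    (∫ x in B, ‖g x‖ ^ p) ^ (1 / p) + (∫ x in B, ‖fderiv ℝ g x‖ ^ p) ^ (1 / p) ≤ 1

/-- The `W^{-1,q}(B)` norm of a vector field, by duality. -/
def dualNormVF (q : ℝ) (B : Set (Fin d → ℝ)) (F : (Fin d → ℝ) → Fin d → ℝ) : ℝ :=
  sSup {t : ℝ | ∃ g, TestVF B (q / (q - 1)) g ∧ t = ∫ x in B, ∑ i, F x i * g x i}

/-- `u` is continuously differentiable on an open neighbourhood of the closed unit ball. -/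
def C1NearClosedUnitBall (u : (Fin d → ℝ) → ℝ) : Prop :=
  ∃ U : Set (Fin d → ℝ), IsOpen U ∧ Metric.closedBall 0 1 ⊆ U ∧ ContDiffOn ℝ 1 u U


open Metric Set Filter


lemma integrableOn_ball_of_continuous {F : Type*} [NormedAddCommGroup F]
    {f : (Fin d → ℝ) → F} (hf : Continuous f) (c : Fin d → ℝ) (r : ℝ) :
    IntegrableOn f (Metric.ball c r) := by
  exact (hf.continuousOn.integrableOn_compact (isCompact_closedBall c r)).mono_set
    Metric.ball_subset_closedBall

lemma rpow_le_one_of_rpow_le_one {A e : ℝ} (he : 0 < e) (h : A ^ e ≤ 1) : A ≤ 1 := by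
  by_contra hc
  push_neg at hc
  have h1 : (1:ℝ) < A ^ e :=
    (Real.one_lt_rpow_iff_of_pos (lt_trans one_pos hc)).2 (Or.inl ⟨hc, he⟩)
  linarith

lemma clm_apply_eq_sum (L : (Fin d → ℝ) →L[ℝ] ℝ) (s : Fin d → ℝ) :
    L s = ∑ i, s i * L (Pi.single i 1) := by
  have h : s = ∑ i, s i • (Pi.single i 1 : Fin d → ℝ) := by
    funext j
    simp [Finset.sum_apply, Pi.single_apply]
  conv_lhs => rw [h]
  rw [map_sum]
  simp [smul_eq_mul]

lemma fderiv_translate {f : (Fin d → ℝ) → ℝ} (hf : Differentiable ℝ f)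
    (a x : Fin d → ℝ) : fderiv ℝ (fun y => f (y + a)) x = fderiv ℝ f (x + a) := by
  have h : HasFDerivAt (fun y : Fin d → ℝ => f (y + a)) (fderiv ℝ f (x + a)) x := by
    have := (hf (x + a)).hasFDerivAt.comp x ((hasFDerivAt_id x).add_const a)
    exact this
  exact h.fderiv


set_option maxHeartbeats 1000000 in
/-- Mollification error in the dual Sobolev norm. For `ψ ∈ C_c^∞(B_{1/4})`
with `∫ψ = 1` there is `C = C(d, ψ)` such that for every `q ∈ [2, ∞)` and every `u` which is
`C¹` near the closed unit ball, `‖u - ψ∗u‖_{W^{-1,q}(B_{3/4})} ≤ C ‖∇u‖_{W^{-1,q}(B_1)}`. -/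
theorem statement14 (d : ℕ) (hd : 1 ≤ d) (ψ : (Fin d → ℝ) → ℝ)
    (hψs : ∀ n : ℕ, ContDiff ℝ n ψ) (hψc : HasCompactSupport ψ)
    (hψsupp : tsupport ψ ⊆ Metric.ball 0 (1 / 4)) (hψint : ∫ x, ψ x = 1) :
    ∃ C : ℝ, 0 < C ∧
      ∀ q : ℝ, 2 ≤ q →
        ∀ u : (Fin d → ℝ) → ℝ, C1NearClosedUnitBall u →
          dualNorm q (Metric.ball 0 (3 / 4))
              (fun x => u x - ∫ t in Metric.ball (0 : Fin d → ℝ) (1 / 4), ψ t * u (x - t))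
            ≤ C * dualNormVF q (Metric.ball 0 1) (gradVec u) := by
  classical
  have hψcont : Continuous ψ := (hψs 1).continuous
  have hC0 : (0:ℝ) ≤ ∫ x, |ψ x| := integral_nonneg fun x => abs_nonneg _
  refine ⟨4⁻¹ * (∫ x, |ψ x|) + 1, by linarith, ?_⟩
  intro q hq u hu
  obtain ⟨U, hUopen, hUsub, huC1⟩ := hu
  have hq1 : 1 < q := lt_of_lt_of_le one_lt_two hq
  unfold dualNorm dualNormVF
  set p := q / (q - 1) with hp
  have hp_pos : 0 < p := div_pos (by linarith) (by linarith)
  have hp_one : 1 ≤ p := by rw [hp, le_div_iff₀ (by linarith)]; linarith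
  have hp_ne : p ≠ 0 := ne_of_gt hp_pos
  -- cutoff construction
  obtain ⟨δ, hδpos, hδsub⟩ :=
    (isCompact_closedBall (0 : Fin d → ℝ) 1).exists_cthickening_subset_open hUopen hUsub
  have hcbU : closedBall (0 : Fin d → ℝ) (1 + δ) ⊆ U := by
    rw [add_comm]
    rw [← cthickening_closedBall hδpos.le zero_le_one]
    exact hδsub
  set χ : ContDiffBump (0 : Fin d → ℝ) := ⟨1 + δ/2, 1 + δ, by linarith, by linarith⟩ with hχ
  set v : (Fin d → ℝ) → ℝ := fun x => χ x * u x with hvdef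
  have hχsupp : tsupport (χ : (Fin d → ℝ) → ℝ) = closedBall 0 (1 + δ) := χ.tsupport_eq
  have hveq : ∀ x ∈ ball (0 : Fin d → ℝ) (1 + δ/2), v x = u x := by
    intro x hx
    have h1 : χ x = 1 := χ.one_of_mem_closedBall (ball_subset_closedBall hx)
    simp [hvdef, h1]
  have hvC1 : ContDiff ℝ 1 v := by
    rw [contDiff_iff_contDiffAt]
    intro x
    by_cases hx : x ∈ U
    · exact (χ.contDiff (n := 1)).contDiffAt.mul (huC1.contDiffAt (hUopen.mem_nhds hx))
    · have hx' : x ∉ tsupport (χ : (Fin d → ℝ) → ℝ) := fun hmem => hx (hcbU (hχsupp ▸ hmem))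
      have hev : v =ᶠ[nhds x] (fun _ => (0:ℝ)) := by
        filter_upwards [(isClosed_tsupport (χ : (Fin d → ℝ) → ℝ)).isOpen_compl.mem_nhds hx'] with y hy
        have h0 : χ y = 0 := image_eq_zero_of_notMem_tsupport hy
        simp [hvdef, h0]
      exact (contDiffAt_const (c := (0:ℝ))).congr_of_eventuallyEq hev
  have hvsupp : HasCompactSupport v := by
    apply HasCompactSupport.intro (isCompact_closedBall (0 : Fin d → ℝ) (1 + δ))
    intro x hx
    have h0 : χ x = 0 := image_eq_zero_of_notMem_tsupport (by rw [hχsupp]; exact hx)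
    simp [hvdef, h0]
  have hvcont : Continuous v := hvC1.continuous
  have hvd : Differentiable ℝ v := hvC1.differentiable one_ne_zero
  have hfdv : Continuous (fderiv ℝ v) := hvC1.continuous_fderiv one_ne_zero
  have hvgrad : ∀ x ∈ ball (0 : Fin d → ℝ) (1 + δ/2), fderiv ℝ v x = fderiv ℝ u x := by
    intro x hx
    exact Filter.EventuallyEq.fderiv_eq
      (by filter_upwards [isOpen_ball.mem_nhds hx] with y hy; exact hveq y hy)

  -- the dual set for the gradient
  set S : Set ℝ := {t : ℝ | ∃ g, TestVF (Metric.ball (0 : Fin d → ℝ) 1) p g ∧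
      t = ∫ x in Metric.ball (0 : Fin d → ℝ) 1, ∑ i, gradVec u x i * g x i} with hSdef
  -- bound on the gradient on the closed unit ball
  obtain ⟨K₀', hK₀'⟩ := (isCompact_closedBall (0 : Fin d → ℝ) 1).exists_bound_of_continuousOn
    ((huC1.continuousOn_fderiv_of_isOpen hUopen le_rfl).mono hUsub)
  set K₀ : ℝ := max K₀' 0 with hK₀def
  have hK₀ : ∀ x ∈ closedBall (0 : Fin d → ℝ) 1, ‖fderiv ℝ u x‖ ≤ K₀ :=
    fun x hx => (hK₀' x hx).trans (le_max_left _ _)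
  have hK₀0 : (0:ℝ) ≤ K₀ := le_max_right _ _
  have hS0 : (0:ℝ) ∈ S := by
    rw [hSdef]
    refine ⟨fun _ => (0 : Fin d → ℝ), ⟨fun n => contDiff_const, ?_, ?_, ?_⟩, by simp⟩
    · have hsup : Function.support (fun _ : Fin d → ℝ => (0 : Fin d → ℝ)) = ∅ :=
        Function.support_eq_empty_iff.2 rfl
      rw [HasCompactSupport, tsupport, hsup, closure_empty]
      exact isCompact_empty
    · have hsup : Function.support (fun _ : Fin d → ℝ => (0 : Fin d → ℝ)) = ∅ :=
        Function.support_eq_empty_iff.2 rfl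
      rw [tsupport, hsup, closure_empty]
      exact empty_subset _
    · have h1 : (fun x : Fin d → ℝ => ‖(0 : Fin d → ℝ)‖ ^ p) = fun _ => (0:ℝ) := by
        funext x; simp [Real.zero_rpow hp_ne]
      have h2 : (fderiv ℝ (fun _ : Fin d → ℝ => (0 : Fin d → ℝ))) = fun _ => 0 := by
        funext x; exact fderiv_const_apply 0
      rw [h2]
      simp [Real.zero_rpow hp_ne, Real.zero_rpow (inv_ne_zero hp_ne)]
  have hSbound : ∀ t ∈ S, t ≤ (d : ℝ) * K₀ * ((volume (Metric.ball (0 : Fin d → ℝ) 1)).toReal + 1) := by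
    rw [hSdef]
    rintro t ⟨g, ⟨hg_s, hg_c, hg_sub, hg_n⟩, rfl⟩
    have hgc : Continuous g := (hg_s 1).continuous
    have hnormp_int : IntegrableOn (fun y => ‖g y‖ ^ p) (Metric.ball (0 : Fin d → ℝ) 1) :=
      integrableOn_ball_of_continuous (hgc.norm.rpow_const (fun x => Or.inr hp_pos.le)) _ _
    have hA : ∫ y in Metric.ball (0 : Fin d → ℝ) 1, ‖g y‖ ^ p ≤ 1 := by
      have h2 : 0 ≤ (∫ y in Metric.ball (0 : Fin d → ℝ) 1, ‖fderiv ℝ g y‖ ^ p) ^ (1/p) :=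
        Real.rpow_nonneg (setIntegral_nonneg measurableSet_ball
          (fun y _ => Real.rpow_nonneg (norm_nonneg _) _)) _
      exact rpow_le_one_of_rpow_le_one (e := 1/p) (one_div_pos.2 hp_pos) (by linarith [hg_n])
    have hptw : ∀ y ∈ Metric.ball (0 : Fin d → ℝ) 1,
        ‖∑ i, gradVec u y i * g y i‖ ≤ (d : ℝ) * K₀ * (1 + ‖g y‖ ^ p) := by
      intro y hy
      have hfd : ‖fderiv ℝ u y‖ ≤ K₀ := hK₀ y (ball_subset_closedBall hy)
      have h1 : ∀ i, ‖gradVec u y i * g y i‖ ≤ K₀ * ‖g y‖ := by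
        intro i
        rw [norm_mul]
        have h2 : ‖gradVec u y i‖ ≤ K₀ := by
          have h3 := (fderiv ℝ u y).le_opNorm (Pi.single i (1:ℝ))
          rw [Pi.norm_single, norm_one, mul_one] at h3
          exact h3.trans hfd
        exact mul_le_mul h2 (norm_le_pi_norm (g y) i) (norm_nonneg _) hK₀0
      have hs : ‖∑ i, gradVec u y i * g y i‖ ≤ ∑ _i : Fin d, K₀ * ‖g y‖ :=
        (norm_sum_le _ _).trans (Finset.sum_le_sum fun i _ => h1 i)
      rw [Finset.sum_const, Finset.card_univ, Fintype.card_fin, nsmul_eq_mul] at hs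
      have hgy : ‖g y‖ ≤ 1 + ‖g y‖ ^ p := by
        rcases le_total (‖g y‖) 1 with h | h
        · have h4 : 0 ≤ ‖g y‖ ^ p := Real.rpow_nonneg (norm_nonneg _) _
          linarith
        · have h4 : ‖g y‖ ^ (1:ℝ) ≤ ‖g y‖ ^ p := Real.rpow_le_rpow_of_exponent_le h hp_one
          rw [Real.rpow_one] at h4
          linarith
      calc ‖∑ i, gradVec u y i * g y i‖ ≤ (d : ℝ) * (K₀ * ‖g y‖) := hs
        _ = (d : ℝ) * K₀ * ‖g y‖ := by ring
        _ ≤ (d : ℝ) * K₀ * (1 + ‖g y‖ ^ p) := by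
            exact mul_le_mul_of_nonneg_left hgy (by positivity)
    have hInt : (∫ y in Metric.ball (0 : Fin d → ℝ) 1, ∑ i, gradVec u y i * g y i)
        ≤ ∫ y in Metric.ball (0 : Fin d → ℝ) 1, (d : ℝ) * K₀ * (1 + ‖g y‖ ^ p) := by
      refine le_trans (le_abs_self _) ?_
      rw [← Real.norm_eq_abs]
      refine norm_integral_le_of_norm_le ?_ ?_
      · exact (((integrableOn_const measure_ball_lt_top.ne).add hnormp_int).const_mul _)
      · exact (ae_restrict_iff' measurableSet_ball).2 (Eventually.of_forall hptw)
    refine hInt.trans ?_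
    rw [integral_const_mul, integral_add (integrableOn_const (C := (1:ℝ)) measure_ball_lt_top.ne) hnormp_int]
    rw [setIntegral_const]
    have : (volume (Metric.ball (0 : Fin d → ℝ) 1)).toReal • (1:ℝ)
        + (∫ y in Metric.ball (0 : Fin d → ℝ) 1, ‖g y‖ ^ p)
        ≤ (volume (Metric.ball (0 : Fin d → ℝ) 1)).toReal + 1 := by
      rw [smul_eq_mul, mul_one]
      linarith [hA]
    exact mul_le_mul_of_nonneg_left this (by positivity)

  have hSbdd : BddAbove S := ⟨_, fun t ht => hSbound t ht⟩
  have hR0 : 0 ≤ sSup S := le_csSup hSbdd hS0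
  refine Real.sSup_le ?_ (mul_nonneg (by linarith) hR0)
  rintro t ⟨g, ⟨hg_s, hg_c, hg_sub, hg_n⟩, rfl⟩
  have hgc : Continuous g := (hg_s 1).continuous
  have hgd : Differentiable ℝ g := (hg_s 1).differentiable one_ne_zero
  have hgfc : Continuous (fderiv ℝ g) := (hg_s 1).continuous_fderiv one_ne_zero
  have hkey : ∀ s : Fin d → ℝ, s ∈ Metric.ball (0 : Fin d → ℝ) (1/4) →
      ∀ τ : ℝ, τ ∈ Set.Ioc (0:ℝ) 1 →
      |∫ y in Metric.ball (0 : Fin d → ℝ) 1, ∑ i, gradVec u y i * (g (y + τ • s) * s i)|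
        ≤ ‖s‖ * sSup S := by
    have hgc : Continuous g := (hg_s 1).continuous
    have hgd : Differentiable ℝ g := (hg_s 1).differentiable one_ne_zero
    have hgfc : Continuous (fderiv ℝ g) := (hg_s 1).continuous_fderiv one_ne_zero
    -- translation bounds on the two L^p integrals
    have htrans1 : ∀ a : Fin d → ℝ,
        (∫ y in Metric.ball (0 : Fin d → ℝ) 1, |g (y + a)| ^ p)
          ≤ ∫ x in Metric.ball (0 : Fin d → ℝ) (3/4), |g x| ^ p := by
      intro a
      have hF : HasCompactSupport (fun x : Fin d → ℝ => |g x| ^ p) := by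
        have := hg_c.comp_left (g := fun r : ℝ => |r| ^ p) (by simp [Real.zero_rpow hp_ne])
        simpa [Function.comp_def] using this
      have hFc : Continuous (fun x : Fin d → ℝ => |g x| ^ p) :=
        hgc.abs.rpow_const (fun x => Or.inr hp_pos.le)
      have hint : Integrable (fun y : Fin d → ℝ => |g (y + a)| ^ p) := by
        have h1 : Continuous (fun y : Fin d → ℝ => |g (y + a)| ^ p) :=
          (hgc.comp (continuous_id.add continuous_const)).abs.rpow_const (fun x => Or.inr hp_pos.le)
        apply h1.integrable_of_hasCompactSupport
        have h2 := hF.comp_homeomorph (Homeomorph.addRight a)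
        simpa [Function.comp_def] using h2
      calc (∫ y in Metric.ball (0 : Fin d → ℝ) 1, |g (y + a)| ^ p)
          ≤ ∫ y : Fin d → ℝ, |g (y + a)| ^ p :=
            setIntegral_le_integral hint (Eventually.of_forall (fun y => by positivity))
        _ = ∫ y : Fin d → ℝ, |g y| ^ p := by
            exact integral_add_right_eq_self (fun y => |g y| ^ p) a
        _ = ∫ x in Metric.ball (0 : Fin d → ℝ) (3/4), |g x| ^ p := by
            symm
            apply setIntegral_eq_integral_of_forall_compl_eq_zero
            intro x hx
            have h0 : g x = 0 := image_eq_zero_of_notMem_tsupport (fun hmem => hx (hg_sub hmem))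
            simp [h0, Real.zero_rpow hp_ne]
    have htrans2 : ∀ a : Fin d → ℝ,
        (∫ y in Metric.ball (0 : Fin d → ℝ) 1, ‖fderiv ℝ g (y + a)‖ ^ p)
          ≤ ∫ x in Metric.ball (0 : Fin d → ℝ) (3/4), ‖fderiv ℝ g x‖ ^ p := by
      intro a
      have hF : HasCompactSupport (fun x : Fin d → ℝ => ‖fderiv ℝ g x‖ ^ p) := by
        have := (hg_c.fderiv ℝ).comp_left
          (g := fun L : (Fin d → ℝ) →L[ℝ] ℝ => ‖L‖ ^ p) (by simp [Real.zero_rpow hp_ne])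
        simpa [Function.comp_def] using this
      have hint : Integrable (fun y : Fin d → ℝ => ‖fderiv ℝ g (y + a)‖ ^ p) := by
        have h1 : Continuous (fun y : Fin d → ℝ => ‖fderiv ℝ g (y + a)‖ ^ p) :=
          ((hgfc.comp (continuous_id.add continuous_const)).norm).rpow_const
            (fun x => Or.inr hp_pos.le)
        apply h1.integrable_of_hasCompactSupport
        have h2 := hF.comp_homeomorph (Homeomorph.addRight a)
        simpa [Function.comp_def] using h2
      calc (∫ y in Metric.ball (0 : Fin d → ℝ) 1, ‖fderiv ℝ g (y + a)‖ ^ p)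
          ≤ ∫ y : Fin d → ℝ, ‖fderiv ℝ g (y + a)‖ ^ p :=
            setIntegral_le_integral hint (Eventually.of_forall (fun y => by positivity))
        _ = ∫ y : Fin d → ℝ, ‖fderiv ℝ g y‖ ^ p :=
            integral_add_right_eq_self (fun y => ‖fderiv ℝ g y‖ ^ p) a
        _ = ∫ x in Metric.ball (0 : Fin d → ℝ) (3/4), ‖fderiv ℝ g x‖ ^ p := by
            symm
            apply setIntegral_eq_integral_of_forall_compl_eq_zero
            intro x hx
            have h0 : g =ᶠ[nhds x] (fun _ => (0:ℝ)) := by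
              filter_upwards [(isClosed_tsupport g).isOpen_compl.mem_nhds
                (fun hmem => hx (hg_sub hmem))] with y hy
              exact image_eq_zero_of_notMem_tsupport hy
            have h1 : fderiv ℝ g x = 0 := by
              rw [h0.fderiv_eq, fderiv_const_apply]
            simp [h1, Real.zero_rpow hp_ne]
    intro s hs τ hτ
    rcases eq_or_ne s 0 with rfl | hs0
    · simp
    have hsn : 0 < ‖s‖ := norm_pos_iff.2 hs0
    have hsnorm : ‖s‖ < 1/4 := mem_ball_zero_iff.1 hs
    have hτ1 : |τ| ≤ 1 := abs_le.2 ⟨by linarith [hτ.1], hτ.2⟩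
    have hτs : ‖τ • s‖ < 1/4 := by
      rw [norm_smul, Real.norm_eq_abs]
      calc |τ| * ‖s‖ ≤ 1 * ‖s‖ := mul_le_mul_of_nonneg_right hτ1 (norm_nonneg s)
        _ = ‖s‖ := one_mul _
        _ < 1/4 := hsnorm
    set a : Fin d → ℝ := τ • s with ha
    set h : (Fin d → ℝ) → (Fin d → ℝ) := fun y => (‖s‖⁻¹ * g (y + a)) • s with hh
    have hsupsub : tsupport h ⊆ Metric.ball (0 : Fin d → ℝ) 1 := by
      have h1 : tsupport h ⊆ {y : Fin d → ℝ | y + a ∈ tsupport g} := by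
        apply closure_minimal ?_
          (IsClosed.preimage (continuous_id.add continuous_const) (isClosed_tsupport g))
        intro y hy
        have hgne : g (y + a) ≠ 0 := by
          intro h0
          apply hy
          simp [hh, h0]
        exact subset_tsupport g hgne
      intro y hy
      have h2 := h1 hy
      rw [mem_ball_zero_iff]
      have h3 : ‖y + a‖ < 3/4 := mem_ball_zero_iff.1 (hg_sub h2)
      calc ‖y‖ = ‖(y + a) - a‖ := by rw [add_sub_cancel_right]
        _ ≤ ‖y + a‖ + ‖a‖ := norm_sub_le _ _
        _ < 3/4 + 1/4 := by exact add_lt_add h3 hτs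
        _ = 1 := by norm_num
    have hhc : HasCompactSupport h := by
      rw [HasCompactSupport]
      exact Metric.isCompact_of_isClosed_isBounded (isClosed_tsupport h)
        (isBounded_ball.subset hsupsub)
    have hsmooth : ∀ n : ℕ, ContDiff ℝ n h := by
      intro n
      exact (contDiff_const.mul ((hg_s n).comp (contDiff_id.add contDiff_const))).smul contDiff_const
    have heq1 : ∀ y, ‖h y‖ = |g (y + a)| := by
      intro y
      rw [hh]
      simp only [norm_smul, Real.norm_eq_abs, abs_mul, abs_inv, abs_norm]
      field_simp
    have hdiffc : ∀ y, DifferentiableAt ℝ (fun z => g (z + a)) y := by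
      intro y
      exact (hgd (y + a)).comp y ((differentiable_id.add_const a).differentiableAt)
    have heq2 : ∀ y, ‖fderiv ℝ h y‖ = ‖fderiv ℝ g (y + a)‖ := by
      intro y
      have hd1 : DifferentiableAt ℝ (fun z => ‖s‖⁻¹ * g (z + a)) y := (hdiffc y).const_mul _
      rw [hh]
      rw [fderiv_smul_const hd1 s, ContinuousLinearMap.norm_smulRight_apply]
      have h5 : fderiv ℝ (fun z => ‖s‖⁻¹ * g (z + a)) y
          = ‖s‖⁻¹ • fderiv ℝ (fun z => g (z + a)) y := fderiv_const_mul (hdiffc y) _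
      rw [h5, norm_smul, fderiv_translate hgd a y]
      simp only [norm_inv, norm_norm]
      field_simp
    have hTV : TestVF (Metric.ball (0 : Fin d → ℝ) 1) p h := by
      refine ⟨hsmooth, hhc, hsupsub, ?_⟩
      have e1 : (∫ y in Metric.ball (0 : Fin d → ℝ) 1, ‖h y‖ ^ p)
          = ∫ y in Metric.ball (0 : Fin d → ℝ) 1, |g (y + a)| ^ p := by
        simp only [heq1]
      have e2 : (∫ y in Metric.ball (0 : Fin d → ℝ) 1, ‖fderiv ℝ h y‖ ^ p)
          = ∫ y in Metric.ball (0 : Fin d → ℝ) 1, ‖fderiv ℝ g (y + a)‖ ^ p := by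
        simp only [heq2]
      rw [e1, e2]
      have n1 : (0:ℝ) ≤ ∫ y in Metric.ball (0 : Fin d → ℝ) 1, |g (y + a)| ^ p :=
        setIntegral_nonneg measurableSet_ball (fun y _ => by positivity)
      have n2 : (0:ℝ) ≤ ∫ y in Metric.ball (0 : Fin d → ℝ) 1, ‖fderiv ℝ g (y + a)‖ ^ p :=
        setIntegral_nonneg measurableSet_ball (fun y _ => by positivity)
      refine le_trans (add_le_add
        (Real.rpow_le_rpow n1 (htrans1 a) (by positivity))
        (Real.rpow_le_rpow n2 (htrans2 a) (by positivity))) hg_n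
    set T : ℝ := ∫ y in Metric.ball (0 : Fin d → ℝ) 1, ∑ i, gradVec u y i * (g (y + a) * s i)
      with hT
    have hrel : (∫ y in Metric.ball (0 : Fin d → ℝ) 1, ∑ i, gradVec u y i * h y i) = ‖s‖⁻¹ * T := by
      rw [hT, ← integral_const_mul]
      refine integral_congr_ae (Eventually.of_forall (fun y => ?_))
      show (∑ i, gradVec u y i * h y i) = ‖s‖⁻¹ * ∑ i, gradVec u y i * (g (y + a) * s i)
      rw [Finset.mul_sum]
      refine Finset.sum_congr rfl (fun i _ => ?_)
      simp only [hh, Pi.smul_apply, smul_eq_mul]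
      ring
    have hmem : ‖s‖⁻¹ * T ∈ S := by
      rw [hSdef]
      exact ⟨h, hTV, hrel.symm⟩
    have hmemneg : -(‖s‖⁻¹ * T) ∈ S := by
      rw [hSdef]
      refine ⟨fun y => -(h y), ⟨fun n => (hsmooth n).neg, ?_, ?_, ?_⟩, ?_⟩
      · have hts : tsupport (fun y => -(h y)) = tsupport h := by
          rw [tsupport, tsupport, Function.support_fun_neg]
        rw [HasCompactSupport, hts]
        exact hhc
      · have hts : tsupport (fun y => -(h y)) = tsupport h := by
          rw [tsupport, tsupport, Function.support_fun_neg]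
        rw [hts]
        exact hsupsub
      · have e1 : (∫ y in Metric.ball (0 : Fin d → ℝ) 1, ‖-(h y)‖ ^ p)
            = ∫ y in Metric.ball (0 : Fin d → ℝ) 1, ‖h y‖ ^ p := by
          simp only [norm_neg]
        have e2' : ∀ y, fderiv ℝ (fun z => -(h z)) y = -(fderiv ℝ h y) := by
          intro y
          exact fderiv_neg
        have e2 : (∫ y in Metric.ball (0 : Fin d → ℝ) 1, ‖fderiv ℝ (fun z => -(h z)) y‖ ^ p)
            = ∫ y in Metric.ball (0 : Fin d → ℝ) 1, ‖fderiv ℝ h y‖ ^ p := by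
          simp only [e2', norm_neg]
        rw [e1, e2]
        exact hTV.2.2.2
      · rw [← hrel, ← integral_neg]
        refine integral_congr_ae (Eventually.of_forall (fun y => ?_))
        show -(∑ i, gradVec u y i * h y i) = ∑ i, gradVec u y i * (fun z => -(h z)) y i
        rw [← Finset.sum_neg_distrib]
        refine Finset.sum_congr rfl (fun i _ => ?_)
        simp only [Pi.neg_apply]
        ring
    have h1 : ‖s‖⁻¹ * T ≤ sSup S := le_csSup hSbdd hmem
    have h2 : -(‖s‖⁻¹ * T) ≤ sSup S := le_csSup hSbdd hmemneg
    have habs : |T| ≤ ‖s‖ * sSup S := by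
      rw [abs_le]
      constructor
      · have := mul_le_mul_of_nonneg_left h2 hsn.le
        rw [mul_neg] at this
        have h3 : ‖s‖ * (‖s‖⁻¹ * T) = T := by field_simp
        nlinarith [h3]
      · have := mul_le_mul_of_nonneg_left h1 hsn.le
        have h3 : ‖s‖ * (‖s‖⁻¹ * T) = T := by field_simp
        linarith [h3]
    exact habs

  show (∫ x in Metric.ball (0 : Fin d → ℝ) (3/4),
      (u x - ∫ t in Metric.ball (0 : Fin d → ℝ) (1/4), ψ t * u (x - t)) * g x)
    ≤ (4⁻¹ * (∫ x, |ψ x|) + 1) * sSup S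
  have hvcont : Continuous v := hvC1.continuous
  have hvd : Differentiable ℝ v := hvC1.differentiable one_ne_zero
  have hfdv : Continuous (fderiv ℝ v) := hvC1.continuous_fderiv one_ne_zero
  -- step 0 : replace u by v
  have e0 : (∫ x in Metric.ball (0 : Fin d → ℝ) (3/4),
        (u x - ∫ t in Metric.ball (0 : Fin d → ℝ) (1/4), ψ t * u (x - t)) * g x)
      = ∫ x in Metric.ball (0 : Fin d → ℝ) (3/4),
        (v x - ∫ t in Metric.ball (0 : Fin d → ℝ) (1/4), ψ t * v (x - t)) * g x := by
    refine setIntegral_congr_fun measurableSet_ball (fun x hx => ?_)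
    have hx34 : ‖x‖ < 3/4 := mem_ball_zero_iff.1 hx
    have h1 : u x = v x := (hveq x (mem_ball_zero_iff.2 (by linarith))).symm
    have h2 : (∫ t in Metric.ball (0 : Fin d → ℝ) (1/4), ψ t * u (x - t))
        = ∫ t in Metric.ball (0 : Fin d → ℝ) (1/4), ψ t * v (x - t) := by
      refine setIntegral_congr_fun measurableSet_ball (fun w hw => ?_)
      have h4 : ‖w‖ < 1/4 := mem_ball_zero_iff.1 hw
      have h5 : ‖x - w‖ < 1 + δ/2 := by
        calc ‖x - w‖ ≤ ‖x‖ + ‖w‖ := norm_sub_le _ _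
          _ < 1 + δ/2 := by linarith
      rw [hveq _ (mem_ball_zero_iff.2 h5)]
    rw [h1, h2]
  -- step 1 : mollification difference identity
  have e1 : ∀ x : Fin d → ℝ,
      v x - (∫ t in Metric.ball (0 : Fin d → ℝ) (1/4), ψ t * v (x - t))
      = ∫ t in Metric.ball (0 : Fin d → ℝ) (1/4), ψ t * (v x - v (x - t)) := by
    intro x
    have i1 : IntegrableOn (fun t => ψ t * v x) (Metric.ball (0 : Fin d → ℝ) (1/4)) :=
      integrableOn_ball_of_continuous (hψcont.mul continuous_const) _ _
    have i2 : IntegrableOn (fun t => ψ t * v (x - t)) (Metric.ball (0 : Fin d → ℝ) (1/4)) :=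
      integrableOn_ball_of_continuous
        (hψcont.mul (hvcont.comp (continuous_const.sub continuous_id))) _ _
    have h3 : (∫ t in Metric.ball (0 : Fin d → ℝ) (1/4), ψ t * (v x - v (x - t)))
        = (∫ t in Metric.ball (0 : Fin d → ℝ) (1/4), ψ t * v x)
          - ∫ t in Metric.ball (0 : Fin d → ℝ) (1/4), ψ t * v (x - t) := by
      rw [← integral_sub i1 i2]
      refine integral_congr_ae (Eventually.of_forall (fun w => ?_))
      show ψ w * (v x - v (x - w)) = ψ w * v x - ψ w * v (x - w)
      ring
    have h4 : (∫ t in Metric.ball (0 : Fin d → ℝ) (1/4), ψ t * v x) = v x := by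
      rw [integral_mul_const]
      rw [setIntegral_eq_integral_of_forall_compl_eq_zero
        (fun w hw => image_eq_zero_of_notMem_tsupport (fun hmem => hw (hψsupp hmem)))]
      rw [hψint, one_mul]
    rw [h3, h4]
  -- step 2 : FTC
  have e2 : ∀ x w : Fin d → ℝ,
      v x - v (x - w) = ∫ τ in (0:ℝ)..1, (fderiv ℝ v (x - τ • w)) w := by
    intro x w
    have hder : ∀ τ ∈ Set.uIcc (0:ℝ) 1,
        HasDerivAt (fun τ : ℝ => v (x - τ • w)) (-(fderiv ℝ v (x - τ • w)) w) τ := by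
      intro τ _
      have h1 : HasDerivAt (fun τ : ℝ => x - τ • w) (-w) τ := by
        simpa using ((hasDerivAt_id τ).smul_const w).const_sub x
      have h2 := (hvd (x - τ • w)).hasFDerivAt.comp_hasDerivAt τ h1
      simpa [Function.comp_def] using h2
    have hcont : IntervalIntegrable (fun τ : ℝ => -(fderiv ℝ v (x - τ • w)) w) volume 0 1 := by
      apply Continuous.intervalIntegrable
      have h1 : Continuous fun τ : ℝ => fderiv ℝ v (x - τ • w) :=
        hfdv.comp (continuous_const.sub (continuous_id.smul continuous_const))
      exact (h1.clm_apply continuous_const).neg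
    have h5 := intervalIntegral.integral_eq_sub_of_hasDerivAt hder hcont
    rw [intervalIntegral.integral_neg] at h5
    simp only [one_smul, zero_smul, sub_zero] at h5
    linarith [h5]
  -- step 3
  have e3 : (∫ x in Metric.ball (0 : Fin d → ℝ) (3/4),
        (v x - ∫ t in Metric.ball (0 : Fin d → ℝ) (1/4), ψ t * v (x - t)) * g x)
      = ∫ x in Metric.ball (0 : Fin d → ℝ) (3/4),
          ∫ t in Metric.ball (0 : Fin d → ℝ) (1/4), ψ t * (v x - v (x - t)) * g x := by
    refine setIntegral_congr_fun measurableSet_ball (fun x _ => ?_)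
    rw [e1 x, ← integral_mul_const]
  -- Fubini 1
  haveI f34 : IsFiniteMeasure (volume.restrict (Metric.ball (0 : Fin d → ℝ) (3/4))) :=
    ⟨by rw [Measure.restrict_apply_univ]; exact measure_ball_lt_top⟩
  haveI f14 : IsFiniteMeasure (volume.restrict (Metric.ball (0 : Fin d → ℝ) (1/4))) :=
    ⟨by rw [Measure.restrict_apply_univ]; exact measure_ball_lt_top⟩
  have hW : Continuous (fun z : (Fin d → ℝ) × (Fin d → ℝ) =>
      ψ z.2 * (v z.1 - v (z.1 - z.2)) * g z.1) := by
    exact ((hψcont.comp continuous_snd).mul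
      ((hvcont.comp continuous_fst).sub (hvcont.comp (continuous_fst.sub continuous_snd)))).mul
      (hgc.comp continuous_fst)
  have hWsupp : HasCompactSupport (fun z : (Fin d → ℝ) × (Fin d → ℝ) =>
      ψ z.2 * (v z.1 - v (z.1 - z.2)) * g z.1) := by
    apply HasCompactSupport.intro (hg_c.prod hψc)
    intro z hz
    rcases not_and_or.1 (by simpa [Set.mem_prod] using hz) with h | h
    · rw [image_eq_zero_of_notMem_tsupport h]
      ring
    · rw [image_eq_zero_of_notMem_tsupport h]
      ring
  obtain ⟨MW, hMW⟩ := hW.bounded_above_of_compact_support hWsupp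
  have hWint : Integrable (Function.uncurry fun x w : Fin d → ℝ =>
      ψ w * (v x - v (x - w)) * g x)
      ((volume.restrict (Metric.ball (0 : Fin d → ℝ) (3/4))).prod
        (volume.restrict (Metric.ball (0 : Fin d → ℝ) (1/4)))) :=
    Integrable.mono' (integrable_const MW) hW.aestronglyMeasurable (Eventually.of_forall hMW)
  have e4 : (∫ x in Metric.ball (0 : Fin d → ℝ) (3/4),
        ∫ t in Metric.ball (0 : Fin d → ℝ) (1/4), ψ t * (v x - v (x - t)) * g x)
      = ∫ s in Metric.ball (0 : Fin d → ℝ) (1/4),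
          ∫ x in Metric.ball (0 : Fin d → ℝ) (3/4), ψ s * (v x - v (x - s)) * g x :=
    integral_integral_swap hWint
  -- per-s identity
  obtain ⟨Kg, hKg⟩ := hg_c.exists_bound_of_continuous hgc
  obtain ⟨Kv, hKv⟩ := (hvsupp.fderiv ℝ).exists_bound_of_continuous hfdv
  haveI fIoc : IsFiniteMeasure (volume.restrict (Set.Ioc (0:ℝ) 1)) :=
    ⟨by rw [Measure.restrict_apply_univ]; exact measure_Ioc_lt_top⟩
  have e5 : ∀ s ∈ Metric.ball (0 : Fin d → ℝ) (1/4),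
      (∫ x in Metric.ball (0 : Fin d → ℝ) (3/4), ψ s * (v x - v (x - s)) * g x)
      = ∫ τ in Set.Ioc (0:ℝ) 1,
          (ψ s * ∫ y in Metric.ball (0 : Fin d → ℝ) 1,
            ∑ i, gradVec u y i * (g (y + τ • s) * s i)) := by
    intro s hs
    have hsn : ‖s‖ < 1/4 := mem_ball_zero_iff.1 hs
    have s1 : (∫ x in Metric.ball (0 : Fin d → ℝ) (3/4), ψ s * (v x - v (x - s)) * g x)
        = ∫ x in Metric.ball (0 : Fin d → ℝ) (3/4),
            ∫ τ in Set.Ioc (0:ℝ) 1, ψ s * g x * (fderiv ℝ v (x - τ • s)) s := by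
      refine setIntegral_congr_fun measurableSet_ball (fun x _ => ?_)
      rw [e2 x s, intervalIntegral.integral_of_le zero_le_one]
      have h6 : ψ s * (∫ τ in Set.Ioc (0:ℝ) 1, (fderiv ℝ v (x - τ • s)) s) * g x
          = (ψ s * g x) * ∫ τ in Set.Ioc (0:ℝ) 1, (fderiv ℝ v (x - τ • s)) s := by ring
      rw [h6, ← integral_const_mul]
    rw [s1]
    have hcont2 : Continuous (fun z : (Fin d → ℝ) × ℝ =>
        ψ s * g z.1 * (fderiv ℝ v (z.1 - z.2 • s)) s) := by
      have hD : Continuous (fun z : (Fin d → ℝ) × ℝ => fderiv ℝ v (z.1 - z.2 • s)) :=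
        hfdv.comp (continuous_fst.sub (continuous_snd.smul continuous_const))
      exact (continuous_const.mul (hgc.comp continuous_fst)).mul (hD.clm_apply continuous_const)
    have hKg0 : 0 ≤ Kg := (norm_nonneg _).trans (hKg 0)
    have hint2 : Integrable (Function.uncurry fun (x : Fin d → ℝ) (τ : ℝ) =>
        ψ s * g x * (fderiv ℝ v (x - τ • s)) s)
        ((volume.restrict (Metric.ball (0 : Fin d → ℝ) (3/4))).prod
          (volume.restrict (Set.Ioc (0:ℝ) 1))) := by
      refine Integrable.mono' (integrable_const (|ψ s| * Kg * (Kv * ‖s‖)))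
        hcont2.aestronglyMeasurable (Eventually.of_forall (fun z => ?_))
      show ‖ψ s * g z.1 * (fderiv ℝ v (z.1 - z.2 • s)) s‖ ≤ |ψ s| * Kg * (Kv * ‖s‖)
      rw [norm_mul, norm_mul, Real.norm_eq_abs (ψ s)]
      have hb1 : ‖g z.1‖ ≤ Kg := hKg z.1
      have hb2 : ‖(fderiv ℝ v (z.1 - z.2 • s)) s‖ ≤ Kv * ‖s‖ :=
        le_trans ((fderiv ℝ v _).le_opNorm s)
          (mul_le_mul_of_nonneg_right (hKv _) (norm_nonneg s))
      exact mul_le_mul (mul_le_mul_of_nonneg_left hb1 (abs_nonneg _)) hb2 (norm_nonneg _)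
        (by positivity)
    rw [integral_integral_swap hint2]
    refine setIntegral_congr_fun measurableSet_Ioc (fun τ hτ => ?_)
    have hτ1 : |τ| ≤ 1 := abs_le.2 ⟨by linarith [hτ.1], hτ.2⟩
    have hτs : ‖τ • s‖ < 1/4 := by
      rw [norm_smul, Real.norm_eq_abs]
      calc |τ| * ‖s‖ ≤ 1 * ‖s‖ := mul_le_mul_of_nonneg_right hτ1 (norm_nonneg s)
        _ = ‖s‖ := one_mul _
        _ < 1/4 := hsn
    have t1 : (∫ x in Metric.ball (0 : Fin d → ℝ) (3/4), ψ s * g x * (fderiv ℝ v (x - τ • s)) s)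
        = ∫ x : Fin d → ℝ, ψ s * g x * (fderiv ℝ v (x - τ • s)) s := by
      apply setIntegral_eq_integral_of_forall_compl_eq_zero
      intro x hx
      rw [image_eq_zero_of_notMem_tsupport (fun hmem => hx (hg_sub hmem))]
      ring
    have t2 : (∫ x : Fin d → ℝ, ψ s * g x * (fderiv ℝ v (x - τ • s)) s)
        = ∫ y : Fin d → ℝ, ψ s * g (y + τ • s) * (fderiv ℝ v y) s := by
      have h7 := integral_sub_right_eq_self (μ := volume)
        (fun y : Fin d → ℝ => ψ s * g (y + τ • s) * (fderiv ℝ v y) s) (τ • s)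
      rw [← h7]
      refine integral_congr_ae (Eventually.of_forall (fun x => ?_))
      show ψ s * g x * (fderiv ℝ v (x - τ • s)) s
        = ψ s * g (x - τ • s + τ • s) * (fderiv ℝ v (x - τ • s)) s
      rw [sub_add_cancel]
    have t3 : (∫ y : Fin d → ℝ, ψ s * g (y + τ • s) * (fderiv ℝ v y) s)
        = ∫ y in Metric.ball (0 : Fin d → ℝ) 1, ψ s * g (y + τ • s) * (fderiv ℝ v y) s := by
      symm
      apply setIntegral_eq_integral_of_forall_compl_eq_zero
      intro y hy
      have h8 : g (y + τ • s) = 0 := by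
        by_contra h0
        apply hy
        have hmem := hg_sub (subset_tsupport g h0)
        rw [mem_ball_zero_iff] at hmem ⊢
        calc ‖y‖ = ‖(y + τ • s) - τ • s‖ := by rw [add_sub_cancel_right]
          _ ≤ ‖y + τ • s‖ + ‖τ • s‖ := norm_sub_le _ _
          _ < 3/4 + 1/4 := add_lt_add hmem hτs
          _ = 1 := by norm_num
      rw [h8]
      ring
    have t4 : (∫ y in Metric.ball (0 : Fin d → ℝ) 1, ψ s * g (y + τ • s) * (fderiv ℝ v y) s)
        = ψ s * ∫ y in Metric.ball (0 : Fin d → ℝ) 1,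
            ∑ i, gradVec u y i * (g (y + τ • s) * s i) := by
      rw [← integral_const_mul]
      refine setIntegral_congr_fun measurableSet_ball (fun y hy => ?_)
      have hy1 : fderiv ℝ v y = fderiv ℝ u y := by
        apply hvgrad
        rw [mem_ball_zero_iff] at hy ⊢
        linarith
      rw [hy1, clm_apply_eq_sum (fderiv ℝ u y) s, Finset.mul_sum, Finset.mul_sum]
      refine Finset.sum_congr rfl (fun i _ => ?_)
      show ψ s * g (y + τ • s) * (s i * fderiv ℝ u y (Pi.single i 1))
        = ψ s * (gradVec u y i * (g (y + τ • s) * s i))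
      rw [gradVec]
      ring
    rw [t1, t2, t3, t4]
  -- final bound
  have hb : ∀ s ∈ Metric.ball (0 : Fin d → ℝ) (1/4),
      ‖∫ x in Metric.ball (0 : Fin d → ℝ) (3/4), ψ s * (v x - v (x - s)) * g x‖
        ≤ |ψ s| * (4⁻¹ * sSup S) := by
    intro s hs
    rw [e5 s hs]
    have hbnd : ‖∫ τ in Set.Ioc (0:ℝ) 1,
        (ψ s * ∫ y in Metric.ball (0 : Fin d → ℝ) 1,
          ∑ i, gradVec u y i * (g (y + τ • s) * s i))‖
        ≤ ∫ τ in Set.Ioc (0:ℝ) 1, |ψ s| * (4⁻¹ * sSup S) := by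
      refine norm_integral_le_of_norm_le (integrableOn_const measure_Ioc_lt_top.ne)
        ((ae_restrict_iff' measurableSet_Ioc).2 (Eventually.of_forall (fun τ hτ => ?_)))
      rw [Real.norm_eq_abs, abs_mul]
      have h9 := hkey s hs τ hτ
      have h10 : ‖s‖ * sSup S ≤ 4⁻¹ * sSup S :=
        mul_le_mul_of_nonneg_right (le_of_lt (by rw [← one_div]; exact mem_ball_zero_iff.1 hs)) hR0
      exact mul_le_mul_of_nonneg_left (le_trans h9 h10) (abs_nonneg _)
    refine hbnd.trans ?_
    rw [setIntegral_const, Real.volume_real_Ioc]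
    simp
  have e6 : (∫ s in Metric.ball (0 : Fin d → ℝ) (1/4),
        ∫ x in Metric.ball (0 : Fin d → ℝ) (3/4), ψ s * (v x - v (x - s)) * g x)
      ≤ (4⁻¹ * (∫ x, |ψ x|) + 1) * sSup S := by
    refine le_trans (le_abs_self _) ?_
    rw [← Real.norm_eq_abs]
    have hIbd := norm_integral_le_of_norm_le
      (integrableOn_ball_of_continuous (hψcont.abs.mul continuous_const) _ _)
      ((ae_restrict_iff' measurableSet_ball).2 (Eventually.of_forall hb))
    refine le_trans hIbd ?_
    simp only [Pi.mul_apply]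
    rw [integral_mul_const]
    have hψabs_int : Integrable (fun x => |ψ x|) :=
      hψcont.abs.integrable_of_hasCompactSupport (hψc.abs)
    have h8 : (∫ s in Metric.ball (0 : Fin d → ℝ) (1/4), |ψ s|) ≤ ∫ s, |ψ s| :=
      setIntegral_le_integral hψabs_int (Eventually.of_forall (fun s => abs_nonneg _))
    have h9 : 0 ≤ ∫ s in Metric.ball (0 : Fin d → ℝ) (1/4), |ψ s| :=
      setIntegral_nonneg measurableSet_ball (fun s _ => abs_nonneg _)
    nlinarith [hR0]
  calc (∫ x in Metric.ball (0 : Fin d → ℝ) (3/4),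
        (u x - ∫ t in Metric.ball (0 : Fin d → ℝ) (1/4), ψ t * u (x - t)) * g x)
      = _ := e0
    _ = _ := e3
    _ = _ := e4
    _ ≤ _ := e6


end DualSobolev
end
end
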